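/- Let a, b, c : ℤ → ℝ be sequences with a(i+1) − a(i) ≥ 1, b(j+1) − b(j) ≥ 1, c(k+1) − c(k) ≥ 1 for all i, j, k ∈ ℤ. Then the following are equivalent: (1) there exists a set V ⊆ ℤ³ such that (0,0,0) ∈ V; for all j, k ∈ ℤ there is a unique i ∈ ℤ with (i,j,k) ∈ V; for all k, i ∈ ℤ there is a unique j ∈ ℤ with (i,j,k) ∈ V; for all i, j ∈ ℤ there is a unique k ∈ ℤ with (i,j,k) ∈ V; and |a(i) + b(j) + c(k)| = 1/2 for every (i,j,k) ∈ V. (2) |a(i) + b(j) + c(k)| = 1/2 for every (i,j,k) ∈ ℤ³ with i + j + k = 0. Moreover, when (1) holds, necessarily V = {(i,j,k) ∈ ℤ³ : i + j + k = 0}. -/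

import Mathlib

private lemma mono_ge (x : ℤ → ℝ) (hx : ∀ n : ℤ, 1 ≤ x (n + 1) - x n) :
    ∀ m n : ℤ, m ≤ n → ((n : ℝ) - m) ≤ x n - x m := by
  intro m
  refine fun n h => Int.le_induction (motive := fun n _ => ((n : ℝ) - m) ≤ x n - x m) ?_ ?_ n h
  · simp
  · intro n hn ih
    have := hx n
    push_cast at ih ⊢
    linarith

private lemma mono_lt (x : ℤ → ℝ) (hx : ∀ n : ℤ, 1 ≤ x (n + 1) - x n)
    {m n : ℤ} (h : m < n) : 1 ≤ x n - x m := by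
  have h1 := mono_ge x hx m n h.le
  have : (1 : ℝ) ≤ (n : ℝ) - m := by
    have : (1 : ℤ) ≤ n - m := by omega
    exact_mod_cast this
  linarith

private lemma key (u v : ℤ → ℝ) (hu : ∀ n : ℤ, 1 ≤ u (n + 1) - u n)
    (hv : ∀ n : ℤ, 1 ≤ v (n + 1) - v n)
    (t : ℝ) (f : ℤ → ℤ) (hinj : Function.Injective f) (hsurj : Function.Surjective f)
    (hsum : ∀ i : ℤ, |u i + v (f i) + t| = 1 / 2) :
    ∀ i : ℤ, f i = f 0 - i := by
  -- step 1 : f (i+1) < f i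
  have hlt : ∀ i : ℤ, f (i + 1) < f i := by
    intro i
    by_contra hle
    push_neg at hle
    have hne : f i ≠ f (i + 1) := fun h => by
      have := hinj h; omega
    have hlt' : f i < f (i + 1) := lt_of_le_of_ne hle hne
    have h1 : 1 ≤ v (f (i + 1)) - v (f i) := mono_lt v hv hlt'
    have h2 : 1 ≤ u (i + 1) - u i := hu i
    have ha1 := abs_le.mp (hsum i).le
    have ha2 := abs_le.mp (hsum (i + 1)).le
    linarith [ha1.1, ha1.2, ha2.1, ha2.2]
  have hanti : StrictAnti f := strictAnti_int_of_succ_lt hlt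
  -- step 2 : f (i+1) = f i - 1
  have hstep : ∀ i : ℤ, f (i + 1) = f i - 1 := by
    intro i
    by_contra hne
    have h2 : f (i + 1) ≤ f i - 2 := by have := hlt i; omega
    obtain ⟨i0, hi0⟩ := hsurj (f i - 1)
    rcases lt_trichotomy i0 i with h | h | h
    · have := hanti h; omega
    · rw [h] at hi0; omega
    · have h' : i + 1 ≤ i0 := by omega
      rcases eq_or_lt_of_le h' with h'' | h''
      · rw [← h''] at hi0; omega
      · have := hanti h''; omega
  -- conclude
  intro i
  induction i using Int.induction_on with
  | zero => omega
  | succ n ih => have := hstep n; omega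
  | pred n ih => have := hstep (-n - 1); simp at this ⊢; omega

private lemma main_eq (a b c : ℤ → ℝ)
    (ha : ∀ i : ℤ, 1 ≤ a (i + 1) - a i)
    (hb : ∀ j : ℤ, 1 ≤ b (j + 1) - b j)
    (hc : ∀ k : ℤ, 1 ≤ c (k + 1) - c k)
    (V : Set (ℤ × ℤ × ℤ))
    (h0 : ((0, 0, 0) : ℤ × ℤ × ℤ) ∈ V)
    (h1 : ∀ j k : ℤ, ∃! i : ℤ, (i, j, k) ∈ V)
    (h2 : ∀ k i : ℤ, ∃! j : ℤ, (i, j, k) ∈ V)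
    (h3 : ∀ i j : ℤ, ∃! k : ℤ, (i, j, k) ∈ V)
    (h4 : ∀ p ∈ V, |a p.1 + b p.2.1 + c p.2.2| = 1 / 2) :
    V = {p : ℤ × ℤ × ℤ | p.1 + p.2.1 + p.2.2 = 0} := by
  classical
  -- for each k, the slice is the graph of a bijection π k : i ↦ j
  set π : ℤ → ℤ → ℤ := fun k i => (h2 k i).choose with hπdef
  have hπmem : ∀ k i : ℤ, (i, π k i, k) ∈ V := fun k i => (h2 k i).choose_spec.1
  have hπuniq : ∀ k i j : ℤ, (i, j, k) ∈ V → π k i = j := by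
    intro k i j hj
    exact ((h2 k i).choose_spec.2 j hj).symm
  have hπinj : ∀ k : ℤ, Function.Injective (π k) := by
    intro k i1 i2 h
    have := (h1 (π k i1) k).unique (hπmem k i1) (by rw [h]; exact hπmem k i2)
    exact this
  have hπsurj : ∀ k : ℤ, Function.Surjective (π k) := by
    intro k j
    obtain ⟨i, hi, -⟩ := h1 j k
    exact ⟨i, hπuniq k i j hi⟩
  have hπlin : ∀ k i : ℤ, π k i = π k 0 - i := by
    intro k
    refine key a b ha hb (c k) (π k) (hπinj k) (hπsurj k) ?_
    intro i
    exact h4 (i, π k i, k) (hπmem k i)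
  -- for each i, the slice is the graph of a bijection ρ i : j ↦ k
  set ρ : ℤ → ℤ → ℤ := fun i j => (h3 i j).choose with hρdef
  have hρmem : ∀ i j : ℤ, (i, j, ρ i j) ∈ V := fun i j => (h3 i j).choose_spec.1
  have hρuniq : ∀ i j k : ℤ, (i, j, k) ∈ V → ρ i j = k := by
    intro i j k hk
    exact ((h3 i j).choose_spec.2 k hk).symm
  have hρinj : ∀ i : ℤ, Function.Injective (ρ i) := by
    intro i j1 j2 h
    exact (h2 (ρ i j1) i).unique (hρmem i j1) (by rw [h]; exact hρmem i j2)
  have hρsurj : ∀ i : ℤ, Function.Surjective (ρ i) := by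
    intro i k
    obtain ⟨j, hj, -⟩ := h2 k i
    exact ⟨j, hρuniq i j k hj⟩
  have hρlin : ∀ i j : ℤ, ρ i j = ρ i 0 - j := by
    intro i
    refine key b c hb hc (a i) (ρ i) (hρinj i) (hρsurj i) ?_
    intro j
    have := h4 (i, j, ρ i j) (hρmem i j)
    simpa [add_comm, add_left_comm, add_assoc] using this
  -- relations between the constants
  have hπ00 : π 0 0 = 0 := hπuniq 0 0 0 h0
  have hrel : ∀ i k : ℤ, π k i = ρ i 0 - k := by
    intro i k
    have h := hρuniq i (π k i) k (hπmem k i)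
    rw [hρlin i (π k i)] at h
    omega
  have hρ0 : ∀ i : ℤ, ρ i 0 = -i := by
    intro i
    have h := hrel i 0
    rw [hπlin 0 i, hπ00] at h
    omega
  have hπk0 : ∀ k : ℤ, π k 0 = -k := by
    intro k
    have h := hrel 0 k
    rw [hρ0 0] at h
    omega
  -- conclude
  ext ⟨i, j, k⟩
  simp only [Set.mem_setOf_eq]
  constructor
  · intro h
    have := hπuniq k i j h
    rw [hπlin k i, hπk0 k] at this
    omega
  · intro h
    have : π k i = j := by rw [hπlin k i, hπk0 k]; omega
    rw [← this]
    exact hπmem k i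

theorem stmt0 (a b c : ℤ → ℝ)
    (ha : ∀ i : ℤ, 1 ≤ a (i + 1) - a i)
    (hb : ∀ j : ℤ, 1 ≤ b (j + 1) - b j)
    (hc : ∀ k : ℤ, 1 ≤ c (k + 1) - c k) :
    ((∃ V : Set (ℤ × ℤ × ℤ),
        ((0, 0, 0) : ℤ × ℤ × ℤ) ∈ V ∧
        (∀ j k : ℤ, ∃! i : ℤ, (i, j, k) ∈ V) ∧
        (∀ k i : ℤ, ∃! j : ℤ, (i, j, k) ∈ V) ∧
        (∀ i j : ℤ, ∃! k : ℤ, (i, j, k) ∈ V) ∧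
        (∀ p ∈ V, |a p.1 + b p.2.1 + c p.2.2| = 1 / 2)) ↔
      (∀ i j k : ℤ, i + j + k = 0 → |a i + b j + c k| = 1 / 2)) ∧
    (∀ V : Set (ℤ × ℤ × ℤ),
      ((0, 0, 0) : ℤ × ℤ × ℤ) ∈ V →
      (∀ j k : ℤ, ∃! i : ℤ, (i, j, k) ∈ V) →
      (∀ k i : ℤ, ∃! j : ℤ, (i, j, k) ∈ V) →
      (∀ i j : ℤ, ∃! k : ℤ, (i, j, k) ∈ V) →
      (∀ p ∈ V, |a p.1 + b p.2.1 + c p.2.2| = 1 / 2) →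
      V = {p : ℤ × ℤ × ℤ | p.1 + p.2.1 + p.2.2 = 0}) := by
  constructor
  · constructor
    · rintro ⟨V, h0, h1, h2, h3, h4⟩ i j k hijk
      have hV := main_eq a b c ha hb hc V h0 h1 h2 h3 h4
      have hmem : (i, j, k) ∈ V := by rw [hV]; exact hijk
      exact h4 _ hmem
    · intro h
      refine ⟨{p : ℤ × ℤ × ℤ | p.1 + p.2.1 + p.2.2 = 0}, by simp, ?_, ?_, ?_, ?_⟩
      · intro j k
        exact ⟨-j - k, show -j - k + j + k = 0 by ring, fun y hy => by
          have : y + j + k = 0 := hy; omega⟩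
      · intro k i
        exact ⟨-i - k, show i + (-i - k) + k = 0 by ring, fun y hy => by
          have : i + y + k = 0 := hy; omega⟩
      · intro i j
        exact ⟨-i - j, show i + j + (-i - j) = 0 by ring, fun y hy => by
          have : i + j + y = 0 := hy; omega⟩
      · rintro ⟨i, j, k⟩ hp
        exact h i j k hp
  · intro V h0 h1 h2 h3 h4
    exact main_eq a b c ha hb hc V h0 h1 h2 h3 h4
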